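/- arXiv:2410.04996 — 2 statements merged into one kernel-verified Lean document; each statement's English description precedes it below -/
import Mathlib

section
/- Let X be a random vector in ℝᵈ with E‖X‖² < ∞, and let U, Û be random vectors on the same probability space. Then ‖E[Cov(X|U)] − E[Cov(X|Û)]‖_op ≤ 2‖X‖_{L₂} · ‖E[X|Û] − E[X|U]‖_{L₂}, where Cov(X|U) = E[XXᵀ|U] − E[X|U]E[X|U]ᵀ and ‖X‖_{L₂} = (E‖X‖²)^{1/2}. -/
open MeasureTheory
set_option linter.unusedSectionVars false

/-- Operator (spectral) norm of a real matrix, via the induced Euclidean linear map. -/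
noncomputable def opN {d r : ℕ} (M : Matrix (Fin d) (Fin r) ℝ) : ℝ :=
  ‖LinearMap.toContinuousLinearMap (Matrix.toEuclideanLin M)‖

section helpers
variable {Ω : Type*} {m m0 : MeasurableSpace Ω} {μ : Measure Ω}

/-- Bridge: the function-level conditional expectation agrees a.e. with `condExpL2`. -/
lemma condexpL2_ae_eq_condexp' {E : Type*} [NormedAddCommGroup E] [InnerProductSpace ℝ E]
    [CompleteSpace E] [IsFiniteMeasure μ]
    (hm : m ≤ m0) {f : Ω → E} (hf : MemLp f 2 μ) :
    (condExpL2 E ℝ hm (hf.toLp f) : Ω →₂[μ] E) =ᵐ[μ] condExp m μ f := by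
  refine ae_eq_condExp_of_forall_setIntegral_eq hm (hf.integrable one_le_two) ?_ ?_ ?_
  · intro s _ _
    exact (integrable_condExpL2_of_isFiniteMeasure hm).integrableOn
  · intro s hs hμs
    rw [integral_condExpL2_eq hm _ hs hμs.ne]
    exact setIntegral_congr_ae (hm s hs) ((hf.coeFn_toLp).mono fun x hx _ => hx)
  · exact aestronglyMeasurable_condExpL2 hm _

/-- Conditional expectation commutes with continuous linear maps. -/
lemma condexp_clm_comm' {E F : Type*} [NormedAddCommGroup E] [NormedSpace ℝ E] [CompleteSpace E]
    [NormedAddCommGroup F] [NormedSpace ℝ F] [CompleteSpace F]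
    (hm : m ≤ m0) [SigmaFinite (μ.trim hm)] (T : E →L[ℝ] F) {f : Ω → E}
    (hf : Integrable f μ) :
    condExp m μ (fun ω => T (f ω)) =ᵐ[μ] fun ω => T (condExp m μ f ω) := by
  refine (ae_eq_condExp_of_forall_setIntegral_eq hm (T.integrable_comp hf) ?_ ?_ ?_).symm
  · intro s _ _
    exact (T.integrable_comp integrable_condExp).integrableOn
  · intro s hs hμs
    rw [T.integral_comp_comm integrable_condExp.integrableOn,
      T.integral_comp_comm hf.integrableOn, setIntegral_condExp hm hf hs]
  · exact (T.continuous.comp_stronglyMeasurable stronglyMeasurable_condExp).aestronglyMeasurable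

/-- `√(∫ ‖F‖²) = ‖F‖` for an element of `L²`. -/
lemma sqrt_integral_norm_sq_eq {E : Type*} [NormedAddCommGroup E] [InnerProductSpace ℝ E]
    (F : Ω →₂[μ] E) : Real.sqrt (∫ ω, ‖F ω‖ ^ 2 ∂μ) = ‖F‖ := by
  have h1 : ∫ ω, ‖F ω‖ ^ 2 ∂μ = (inner ℝ F F : ℝ) := by
    rw [L2.inner_def]
    exact integral_congr_ae (Filter.Eventually.of_forall fun ω =>
      (real_inner_self_eq_norm_sq _).symm)
  rw [h1, real_inner_self_eq_norm_sq]
  exact Real.sqrt_sq (norm_nonneg _)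

variable [IsProbabilityMeasure μ] {d : ℕ}

/-- Coordinates of the conditional expectation. -/
lemma side_coord (hm : m ≤ m0) {X : Ω → EuclideanSpace ℝ (Fin d)} (hX : MemLp X 2 μ) (i : Fin d) :
    condExp m μ (fun ω => X ω i) =ᵐ[μ]
      ((EuclideanSpace.proj (𝕜 := ℝ) i).compLpL 2 μ
        (condExpL2 (EuclideanSpace ℝ (Fin d)) ℝ hm (hX.toLp X) : Ω →₂[μ] EuclideanSpace ℝ (Fin d))) := by
  have h1 : condExp m μ (fun ω => X ω i) =ᵐ[μ]
      fun ω => (EuclideanSpace.proj (𝕜 := ℝ) i) (condExp m μ X ω) :=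
    condexp_clm_comm' hm (EuclideanSpace.proj (𝕜 := ℝ) i) (hX.integrable one_le_two)
  have hY := condexpL2_ae_eq_condexp' hm hX
  refine h1.trans ?_
  filter_upwards [hY,
    ContinuousLinearMap.coeFn_compLpL (EuclideanSpace.proj (𝕜 := ℝ) i)
      (condExpL2 (EuclideanSpace ℝ (Fin d)) ℝ hm (hX.toLp X) : Ω →₂[μ] EuclideanSpace ℝ (Fin d))] with ω h2 h3
  rw [h3, h2]

set_option maxHeartbeats 2000000 in
/-- One side of the matrix entry computation. -/
lemma side_entry (hm : m ≤ m0) {X : Ω → EuclideanSpace ℝ (Fin d)} (hX : MemLp X 2 μ)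
    (i j : Fin d) :
    ∫ ω, (condExp m μ (fun ω => X ω i * X ω j) ω
        - condExp m μ (fun ω => X ω i) ω * condExp m μ (fun ω => X ω j) ω) ∂μ
      = (∫ ω, X ω i * X ω j ∂μ)
        - (inner ℝ ((EuclideanSpace.proj (𝕜 := ℝ) i).compLpL 2 μ
              (condExpL2 (EuclideanSpace ℝ (Fin d)) ℝ hm (hX.toLp X) : Ω →₂[μ] EuclideanSpace ℝ (Fin d)))
            ((EuclideanSpace.proj (𝕜 := ℝ) j).compLpL 2 μ
              (condExpL2 (EuclideanSpace ℝ (Fin d)) ℝ hm (hX.toLp X) : Ω →₂[μ] EuclideanSpace ℝ (Fin d))) : ℝ) := by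
  set Y2 := (condExpL2 (EuclideanSpace ℝ (Fin d)) ℝ hm (hX.toLp X) : Ω →₂[μ] EuclideanSpace ℝ (Fin d)) with hY2
  set Yi := (EuclideanSpace.proj (𝕜 := ℝ) i).compLpL 2 μ Y2 with hYi
  set Yj := (EuclideanSpace.proj (𝕜 := ℝ) j).compLpL 2 μ Y2 with hYj
  have hci : condExp m μ (fun ω => X ω i) =ᵐ[μ] Yi := side_coord hm hX i
  have hcj : condExp m μ (fun ω => X ω j) =ᵐ[μ] Yj := side_coord hm hX j
  have hXi : MemLp (fun ω => X ω i) 2 μ := (EuclideanSpace.proj (𝕜 := ℝ) i).comp_memLp' hX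
  have hXj : MemLp (fun ω => X ω j) 2 μ := (EuclideanSpace.proj (𝕜 := ℝ) j).comp_memLp' hX
  have hYiYj : Integrable (fun ω => Yi ω * Yj ω) μ := by
    refine (L2.integrable_inner (𝕜 := ℝ) Yi Yj).congr ?_
    filter_upwards with ω
    simp [RCLike.inner_apply, mul_comm]
  have hXiXj : Integrable (fun ω => X ω i * X ω j) μ := by
    refine (L2.integrable_inner (𝕜 := ℝ) (hXi.toLp _) (hXj.toLp _)).congr ?_
    filter_upwards [hXi.coeFn_toLp, hXj.coeFn_toLp] with ω h1 h2
    simp [RCLike.inner_apply, h1, h2, mul_comm]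
  have hcond_mul : Integrable
      (fun ω => condExp m μ (fun ω => X ω i) ω * condExp m μ (fun ω => X ω j) ω) μ := by
    refine hYiYj.congr ?_
    filter_upwards [hci, hcj] with ω h1 h2
    rw [h1, h2]
  rw [integral_sub integrable_condExp hcond_mul, integral_condExp hm]
  congr 1
  rw [L2.inner_def]
  refine integral_congr_ae ?_
  filter_upwards [hci, hcj] with ω h1 h2
  rw [h1, h2]
  simp [RCLike.inner_apply, mul_comm]


/-- Inner product of `L²` pairings against fixed vectors expands entrywise. -/
lemma key_inner (u v : EuclideanSpace ℝ (Fin d)) (F G : Ω →₂[μ] EuclideanSpace ℝ (Fin d)) :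
    (inner ℝ ((innerSL ℝ u).compLpL 2 μ F) ((innerSL ℝ v).compLpL 2 μ G) : ℝ)
      = ∑ i, ∑ j, u i * v j *
          (inner ℝ ((EuclideanSpace.proj (𝕜 := ℝ) i).compLpL 2 μ F)
                 ((EuclideanSpace.proj (𝕜 := ℝ) j).compLpL 2 μ G) : ℝ) := by
  have hint : ∀ i j : Fin d, Integrable (fun ω => F ω i * G ω j) μ := by
    intro i j
    refine (L2.integrable_inner (𝕜 := ℝ) ((EuclideanSpace.proj (𝕜 := ℝ) i).compLpL 2 μ F)
      ((EuclideanSpace.proj (𝕜 := ℝ) j).compLpL 2 μ G)).congr ?_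
    filter_upwards [ContinuousLinearMap.coeFn_compLpL (EuclideanSpace.proj (𝕜 := ℝ) i) F,
      ContinuousLinearMap.coeFn_compLpL (EuclideanSpace.proj (𝕜 := ℝ) j) G] with ω h1 h2
    simp [RCLike.inner_apply, h1, h2, mul_comm]
  have hP : ∀ i j : Fin d,
      (inner ℝ ((EuclideanSpace.proj (𝕜 := ℝ) i).compLpL 2 μ F)
             ((EuclideanSpace.proj (𝕜 := ℝ) j).compLpL 2 μ G) : ℝ)
        = ∫ ω, F ω i * G ω j ∂μ := by
    intro i j
    rw [L2.inner_def]
    refine integral_congr_ae ?_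
    filter_upwards [ContinuousLinearMap.coeFn_compLpL (EuclideanSpace.proj (𝕜 := ℝ) i) F,
      ContinuousLinearMap.coeFn_compLpL (EuclideanSpace.proj (𝕜 := ℝ) j) G] with ω h1 h2
    simp [RCLike.inner_apply, h1, h2, mul_comm]
  rw [L2.inner_def]
  have hae : (fun ω => (inner ℝ (((innerSL ℝ u).compLpL 2 μ F) ω)
        (((innerSL ℝ v).compLpL 2 μ G) ω) : ℝ))
      =ᵐ[μ] fun ω => ∑ i, ∑ j, u i * v j * (F ω i * G ω j) := by
    filter_upwards [ContinuousLinearMap.coeFn_compLpL (innerSL ℝ u) F,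
      ContinuousLinearMap.coeFn_compLpL (innerSL ℝ v) G] with ω h1 h2
    rw [show (inner ℝ (((innerSL ℝ u).compLpL 2 μ F) ω) (((innerSL ℝ v).compLpL 2 μ G) ω) : ℝ)
        = (((innerSL ℝ u).compLpL 2 μ F) ω) * (((innerSL ℝ v).compLpL 2 μ G) ω) by
      simp [RCLike.inner_apply, mul_comm], h1, h2]
    rw [innerSL_apply_apply, innerSL_apply_apply, PiLp.inner_apply, PiLp.inner_apply, Finset.sum_mul_sum]
    refine Finset.sum_congr rfl fun i _ => Finset.sum_congr rfl fun j _ => ?_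
    simp only [RCLike.inner_apply, starRingEnd_apply, star_trivial]
    ring
  rw [integral_congr_ae hae,
    integral_finset_sum _ (fun i _ => integrable_finset_sum _
      (fun j _ => (hint i j).const_mul _))]
  refine Finset.sum_congr rfl fun i _ => ?_
  rw [integral_finset_sum _ (fun j _ => (hint i j).const_mul _)]
  refine Finset.sum_congr rfl fun j _ => ?_
  rw [MeasureTheory.integral_const_mul, hP i j]

/-- Norm bound for pairing against a fixed vector. -/
lemma norm_inner_compLpL_le (u : EuclideanSpace ℝ (Fin d))
    (F : Ω →₂[μ] EuclideanSpace ℝ (Fin d)) :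
    ‖(innerSL ℝ u).compLpL 2 μ F‖ ≤ ‖u‖ * ‖F‖ := by
  refine le_trans (((innerSL ℝ u).compLpL 2 μ).le_opNorm F) ?_
  refine mul_le_mul_of_nonneg_right ?_ (norm_nonneg F)
  exact (ContinuousLinearMap.norm_compLpL_le _).trans (le_of_eq (innerSL_apply_norm (𝕜 := ℝ) u))


/-- Abstract operator norm bound for a matrix of inner-product differences. -/
lemma opN_bound (M : Matrix (Fin d) (Fin d) ℝ)
    (Y2 Z2 : Ω →₂[μ] EuclideanSpace ℝ (Fin d)) (C1 : ℝ)
    (hY2 : ‖Y2‖ ≤ C1) (hZ2 : ‖Z2‖ ≤ C1)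
    (hent : ∀ i j, M i j
      = (inner ℝ ((EuclideanSpace.proj (𝕜 := ℝ) i).compLpL 2 μ Z2)
            ((EuclideanSpace.proj (𝕜 := ℝ) j).compLpL 2 μ Z2) : ℝ)
        - (inner ℝ ((EuclideanSpace.proj (𝕜 := ℝ) i).compLpL 2 μ Y2)
            ((EuclideanSpace.proj (𝕜 := ℝ) j).compLpL 2 μ Y2) : ℝ)) :
    opN M ≤ 2 * C1 * ‖Z2 - Y2‖ := by
  have hC1 : 0 ≤ C1 := le_trans (norm_nonneg _) hY2
  have hbil : ∀ u v : EuclideanSpace ℝ (Fin d),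
      |∑ i, ∑ j, u i * v j * M i j| ≤ 2 * C1 * ‖Z2 - Y2‖ * (‖u‖ * ‖v‖) := by
    intro u v
    set Lu := (innerSL ℝ u).compLpL 2 μ with hLu
    set Lv := (innerSL ℝ v).compLpL 2 μ with hLv
    have hsplit : ∑ i, ∑ j, u i * v j * M i j
        = ((inner ℝ (Lu Z2) (Lv Z2) : ℝ) - (inner ℝ (Lu Y2) (Lv Y2) : ℝ)) := by
      rw [hLu, hLv, key_inner u v Z2 Z2, key_inner u v Y2 Y2, ← Finset.sum_sub_distrib]
      refine Finset.sum_congr rfl fun i _ => ?_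
      rw [← Finset.sum_sub_distrib]
      refine Finset.sum_congr rfl fun j _ => ?_
      rw [hent i j]; ring
    rw [hsplit]
    have hdec : (inner ℝ (Lu Z2) (Lv Z2) : ℝ) - (inner ℝ (Lu Y2) (Lv Y2) : ℝ)
        = (inner ℝ (Lu (Z2 - Y2)) (Lv Z2) : ℝ) + (inner ℝ (Lu Y2) (Lv (Z2 - Y2)) : ℝ) := by
      rw [map_sub, map_sub, inner_sub_left, inner_sub_right]; ring
    rw [hdec]
    have e1 : |(inner ℝ (Lu (Z2 - Y2)) (Lv Z2) : ℝ)| ≤ ‖u‖ * ‖Z2 - Y2‖ * (‖v‖ * C1) := by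
      refine (abs_real_inner_le_norm _ _).trans ?_
      exact mul_le_mul (norm_inner_compLpL_le u _)
        ((norm_inner_compLpL_le v _).trans (mul_le_mul_of_nonneg_left hZ2 (norm_nonneg v)))
        (norm_nonneg _) (by positivity)
    have e2 : |(inner ℝ (Lu Y2) (Lv (Z2 - Y2)) : ℝ)| ≤ ‖u‖ * C1 * (‖v‖ * ‖Z2 - Y2‖) := by
      refine (abs_real_inner_le_norm _ _).trans ?_
      exact mul_le_mul
        ((norm_inner_compLpL_le u _).trans (mul_le_mul_of_nonneg_left hY2 (norm_nonneg u)))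
        (norm_inner_compLpL_le v _) (norm_nonneg _) (by positivity)
    calc |(inner ℝ (Lu (Z2 - Y2)) (Lv Z2) : ℝ) + (inner ℝ (Lu Y2) (Lv (Z2 - Y2)) : ℝ)|
        ≤ |(inner ℝ (Lu (Z2 - Y2)) (Lv Z2) : ℝ)| + |(inner ℝ (Lu Y2) (Lv (Z2 - Y2)) : ℝ)| :=
          abs_add_le _ _
      _ ≤ ‖u‖ * ‖Z2 - Y2‖ * (‖v‖ * C1) + ‖u‖ * C1 * (‖v‖ * ‖Z2 - Y2‖) := add_le_add e1 e2
      _ = 2 * C1 * ‖Z2 - Y2‖ * (‖u‖ * ‖v‖) := by ring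
  unfold opN
  refine ContinuousLinearMap.opNorm_le_bound _ (by positivity) fun v => ?_
  set A := LinearMap.toContinuousLinearMap (Matrix.toEuclideanLin M) with hA
  have hAv : ∀ u : EuclideanSpace ℝ (Fin d),
      (inner ℝ u (A v) : ℝ) = ∑ i, ∑ j, u i * v j * M i j := by
    intro u
    have hcoord : ∀ i, A v i = ∑ j, M i j * v j := by
      intro i
      rw [hA]
      simp [Matrix.toEuclideanLin_apply, Matrix.mulVec, dotProduct]
    rw [PiLp.inner_apply]
    simp only [RCLike.inner_apply, conj_trivial, hcoord, Finset.sum_mul]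
    refine Finset.sum_congr rfl fun i _ => Finset.sum_congr rfl fun j _ => by ring
  by_cases hv : ‖A v‖ = 0
  · rw [hv]; positivity
  · have hpos : 0 < ‖A v‖ := lt_of_le_of_ne (norm_nonneg _) (Ne.symm hv)
    have h1 : ‖A v‖ ^ 2 = (inner ℝ (A v) (A v) : ℝ) := (real_inner_self_eq_norm_sq _).symm
    have h2 : (inner ℝ (A v) (A v) : ℝ) ≤ 2 * C1 * ‖Z2 - Y2‖ * (‖A v‖ * ‖v‖) :=
      (le_abs_self _).trans (by rw [hAv (A v)]; exact hbil (A v) v)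
    have h3 : ‖A v‖ * ‖A v‖ ≤ 2 * C1 * ‖Z2 - Y2‖ * ‖v‖ * ‖A v‖ := by
      nlinarith [h1, h2]
    exact le_of_mul_le_mul_right h3 hpos

end helpers

/-- Bias bound for expected conditional covariance matrices with estimated embeddings:
`‖E[Cov(X|U)] − E[Cov(X|Û)]‖_op ≤ 2 ‖X‖_{L₂} ‖E[X|Û] − E[X|U]‖_{L₂}`. -/
theorem stmt11 {Ω : Type*} {m0 : MeasurableSpace Ω} (μ : Measure Ω) [IsProbabilityMeasure μ]
    {d ru rh : ℕ}
    (X : Ω → EuclideanSpace ℝ (Fin d))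
    (U : Ω → EuclideanSpace ℝ (Fin ru)) (Uh : Ω → EuclideanSpace ℝ (Fin rh))
    (hX : MemLp X 2 μ)
    (hU : MeasurableSpace.comap U inferInstance ≤ m0)
    (hUh : MeasurableSpace.comap Uh inferInstance ≤ m0) :
    opN
      (Matrix.of (fun i j =>
          ∫ ω, (condExp (MeasurableSpace.comap U inferInstance) μ
              (fun ω => X ω i * X ω j) ω
            - condExp (MeasurableSpace.comap U inferInstance) μ (fun ω => X ω i) ω
              * condExp (MeasurableSpace.comap U inferInstance) μ (fun ω => X ω j) ω) ∂μ)
        - Matrix.of (fun i j =>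
          ∫ ω, (condExp (MeasurableSpace.comap Uh inferInstance) μ
              (fun ω => X ω i * X ω j) ω
            - condExp (MeasurableSpace.comap Uh inferInstance) μ (fun ω => X ω i) ω
              * condExp (MeasurableSpace.comap Uh inferInstance) μ (fun ω => X ω j) ω) ∂μ)) ≤
      2 * Real.sqrt (∫ ω, ‖X ω‖ ^ 2 ∂μ) *
        Real.sqrt (∫ ω, ‖condExp (MeasurableSpace.comap Uh inferInstance) μ X ω
          - condExp (MeasurableSpace.comap U inferInstance) μ X ω‖ ^ 2 ∂μ) := by
  have hY := condexpL2_ae_eq_condexp' hU hX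
  have hZ := condexpL2_ae_eq_condexp' hUh hX
  have hrhs1 : Real.sqrt (∫ ω, ‖X ω‖ ^ 2 ∂μ) = ‖hX.toLp X‖ := by
    rw [show (∫ ω, ‖X ω‖ ^ 2 ∂μ) = ∫ ω, ‖hX.toLp X ω‖ ^ 2 ∂μ from
      integral_congr_ae (by filter_upwards [hX.coeFn_toLp] with ω h; rw [h])]
    exact sqrt_integral_norm_sq_eq _
  have hrhs2 : Real.sqrt (∫ ω, ‖condExp (MeasurableSpace.comap Uh inferInstance) μ X ω
          - condExp (MeasurableSpace.comap U inferInstance) μ X ω‖ ^ 2 ∂μ)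
      = ‖(condExpL2 (EuclideanSpace ℝ (Fin d)) ℝ hUh (hX.toLp X)
            : Ω →₂[μ] EuclideanSpace ℝ (Fin d))
          - (condExpL2 (EuclideanSpace ℝ (Fin d)) ℝ hU (hX.toLp X)
            : Ω →₂[μ] EuclideanSpace ℝ (Fin d))‖ := by
    rw [show (∫ ω, ‖condExp (MeasurableSpace.comap Uh inferInstance) μ X ω
          - condExp (MeasurableSpace.comap U inferInstance) μ X ω‖ ^ 2 ∂μ)
        = ∫ ω, ‖((condExpL2 (EuclideanSpace ℝ (Fin d)) ℝ hUh (hX.toLp X)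
            : Ω →₂[μ] EuclideanSpace ℝ (Fin d))
          - (condExpL2 (EuclideanSpace ℝ (Fin d)) ℝ hU (hX.toLp X)
            : Ω →₂[μ] EuclideanSpace ℝ (Fin d))) ω‖ ^ 2 ∂μ from
      integral_congr_ae (by
        filter_upwards [hY, hZ, Lp.coeFn_sub
          (condExpL2 (EuclideanSpace ℝ (Fin d)) ℝ hUh (hX.toLp X)
            : Ω →₂[μ] EuclideanSpace ℝ (Fin d))
          (condExpL2 (EuclideanSpace ℝ (Fin d)) ℝ hU (hX.toLp X)
            : Ω →₂[μ] EuclideanSpace ℝ (Fin d))] with ω h1 h2 h3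
        rw [h3, Pi.sub_apply, h1, h2])]
    exact sqrt_integral_norm_sq_eq _
  rw [hrhs1, hrhs2]
  refine opN_bound _ _ _ ‖hX.toLp X‖
    (norm_condExpL2_coe_le (𝕜 := ℝ) hU _) (norm_condExpL2_coe_le (𝕜 := ℝ) hUh _) ?_
  intro i j
  simp only [Matrix.sub_apply, Matrix.of_apply]
  rw [side_entry hU hX i j, side_entry hUh hX i j]
  ring
end

section
/- Let X ∈ ℝᵈ and scalar Y_j be square-integrable random variables and U, Û random vectors. Then ‖E[Cov(X, E[Y_j|X,U] | U)] − E[Cov(X, E[Y_j|X,Û] | Û)]‖ ≤ ‖X‖_{L₂}·‖E[Y_j|X,Û] − E[Y_j|X,U]‖_{L₂} + ‖Y_j‖_{L₂}·‖E[X|Û] − E[X|U]‖_{L₂}. -/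
open MeasureTheory
open scoped ENNReal

section Aux

variable {α : Type*} {m m0 : MeasurableSpace α} {μ : Measure α}

lemma half_add_half' : (1 : ℝ≥0∞) / 1 = 1 / 2 + 1 / 2 := by
  rw [ENNReal.div_add_div_same, div_one]
  norm_num
  rw [ENNReal.div_self] <;> norm_num

/-- The conditional expectation of an `L²` function is in `L²`. -/
lemma memLp_two_condexp {E : Type*} [NormedAddCommGroup E] [InnerProductSpace ℝ E]
    [CompleteSpace E] [IsProbabilityMeasure μ] (hm : m ≤ m0)
    {f : α → E} (hf : MemLp f 2 μ) : MemLp (μ[f|m]) 2 μ := by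
  have hfin : IsFiniteMeasure (μ.trim hm) := isFiniteMeasure_trim hm
  haveI : SigmaFinite (μ.trim hm) := inferInstance
  set fL : α →₂[μ] E := hf.toLp f with hfL
  have hae : (condExpL2 E ℝ hm fL : α → E) =ᵐ[μ] μ[f|m] := by
    refine ae_eq_condExp_of_forall_setIntegral_eq hm (hf.integrable one_le_two)
      (fun s hs hμs => integrableOn_condExpL2_of_measure_ne_top hm hμs.ne fL)
      (fun s hs hμs => ?_) (aestronglyMeasurable_condExpL2 hm fL)
    rw [integral_condExpL2_eq hm fL hs hμs.ne]
    exact setIntegral_congr_ae (hm s hs) ((hf.coeFn_toLp).mono fun x hx _ => hx)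
  exact (Lp.memLp (condExpL2 E ℝ hm fL : α →₂[μ] E)).ae_eq hae

/-- Pull-out identity at the level of integrals, scalar case. -/
lemma integral_mul_condexp [IsProbabilityMeasure μ] (hm : m ≤ m0) {Y g : α → ℝ}
    (hY : MemLp Y 2 μ) (hgm : StronglyMeasurable[m] g) (hg : MemLp g 2 μ) :
    ∫ x, Y x * g x ∂μ = ∫ x, (μ[Y|m]) x * g x ∂μ := by
  have hfin : IsFiniteMeasure (μ.trim hm) := isFiniteMeasure_trim hm
  haveI : SigmaFinite (μ.trim hm) := inferInstance
  have h2 : Integrable (g * Y) μ := by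
    have := hY.smul hg (r := 1)
    rw [smul_eq_mul] at this
    exact this.integrable le_rfl
  have hpull := condExp_mul_of_stronglyMeasurable_left hgm h2 (hY.integrable one_le_two)
  calc ∫ x, Y x * g x ∂μ = ∫ x, (g * Y) x ∂μ := by
        simp only [Pi.mul_apply, mul_comm]
    _ = ∫ x, (μ[g * Y|m]) x ∂μ := (integral_condExp hm).symm
    _ = ∫ x, (g * μ[Y|m]) x ∂μ := integral_congr_ae hpull
    _ = ∫ x, (μ[Y|m]) x * g x ∂μ := by
        simp only [Pi.mul_apply, mul_comm]

/-- Pull-out identity at the level of integrals, Euclidean case. -/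
lemma integral_smul_condexp {d : ℕ} [IsProbabilityMeasure μ] (hm : m ≤ m0)
    {Y : α → ℝ} {g : α → EuclideanSpace ℝ (Fin d)}
    (hY : MemLp Y 2 μ) (hgm : StronglyMeasurable[m] g) (hg : MemLp g 2 μ) :
    ∫ x, Y x • g x ∂μ = ∫ x, (μ[Y|m]) x • g x ∂μ := by
  have hYc : MemLp (μ[Y|m]) 2 μ := memLp_two_condexp hm hY
  have hint1 : Integrable (fun x => Y x • g x) μ :=
    ((hg.smul hY).integrable le_rfl)
  have hint2 : Integrable (fun x => (μ[Y|m]) x • g x) μ :=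
    ((hg.smul hYc).integrable le_rfl)
  refine PiLp.ext fun i => ?_
  have h1 : (∫ x, Y x • g x ∂μ) i = ∫ x, Y x * g x i ∂μ := by
    have := (EuclideanSpace.proj (𝕜 := ℝ) i).integral_comp_comm hint1
    simp only [PiLp.proj_apply, PiLp.smul_apply, smul_eq_mul] at this
    exact this.symm
  have h2 : (∫ x, (μ[Y|m]) x • g x ∂μ) i = ∫ x, (μ[Y|m]) x * g x i ∂μ := by
    have := (EuclideanSpace.proj (𝕜 := ℝ) i).integral_comp_comm hint2
    simp only [PiLp.proj_apply, PiLp.smul_apply, smul_eq_mul] at this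
    exact this.symm
  rw [h1, h2]
  exact integral_mul_condexp hm hY
    (((EuclideanSpace.proj (𝕜 := ℝ) i).continuous).comp_stronglyMeasurable hgm)
    ((EuclideanSpace.proj (𝕜 := ℝ) i).comp_memLp' hg)

/-- Cauchy–Schwarz bound for `‖∫ φ • V‖`. -/
lemma norm_integral_smul_le {d : ℕ} [IsProbabilityMeasure μ] {φ : α → ℝ}
    {V : α → EuclideanSpace ℝ (Fin d)} (hφ : MemLp φ 2 μ) (hV : MemLp V 2 μ) :
    ‖∫ x, φ x • V x ∂μ‖ ≤
      Real.sqrt (∫ x, ‖V x‖ ^ 2 ∂μ) * Real.sqrt (∫ x, (φ x) ^ 2 ∂μ) := by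
  have hpq : Real.HolderConjugate 2 2 := Real.HolderConjugate.two_two
  have h2 : (ENNReal.ofReal 2) = 2 := by norm_num
  have hV' : MemLp (fun x => ‖V x‖) (ENNReal.ofReal 2) μ := by rw [h2]; exact hV.norm
  have hφ' : MemLp (fun x => |φ x|) (ENNReal.ofReal 2) μ := by
    rw [h2]
    simpa [Real.norm_eq_abs] using hφ.norm
  have hCS := integral_mul_le_Lp_mul_Lq_of_nonneg hpq
    (Filter.Eventually.of_forall fun x => norm_nonneg (V x))
    (Filter.Eventually.of_forall fun x => abs_nonneg (φ x)) hV' hφ'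
  have hpow : ∀ a : ℝ, 0 ≤ a → a ^ (2:ℝ) = a ^ (2:ℕ) := fun a ha => by
    rw [← Real.rpow_natCast a 2]; norm_num
  calc ‖∫ x, φ x • V x ∂μ‖ ≤ ∫ x, ‖φ x • V x‖ ∂μ := norm_integral_le_integral_norm _
    _ = ∫ x, ‖V x‖ * |φ x| ∂μ := by
        congr 1; ext x; rw [norm_smul, mul_comm, Real.norm_eq_abs]
    _ ≤ (∫ x, ‖V x‖ ^ (2:ℝ) ∂μ) ^ ((1:ℝ)/2) * (∫ x, |φ x| ^ (2:ℝ) ∂μ) ^ ((1:ℝ)/2) := hCS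
    _ = Real.sqrt (∫ x, ‖V x‖ ^ 2 ∂μ) * Real.sqrt (∫ x, (φ x) ^ 2 ∂μ) := by
        rw [Real.sqrt_eq_rpow, Real.sqrt_eq_rpow]
        congr 2
        · apply integral_congr_ae; filter_upwards with x
          rw [hpow _ (norm_nonneg _)]
        · apply integral_congr_ae; filter_upwards with x
          rw [hpow _ (abs_nonneg _), sq_abs]

end Aux

/-- Bias bound for expected conditional covariances `E[Cov(X, E[Y_j|X,U] | U)]` with
estimated embeddings:
`‖E[Cov(X,E[Y|X,U]|U)] − E[Cov(X,E[Y|X,Û]|Û)]‖ ≤ ‖X‖_{L₂}‖E[Y|X,Û] − E[Y|X,U]‖_{L₂}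
  + ‖Y‖_{L₂}‖E[X|Û] − E[X|U]‖_{L₂}`. -/
theorem stmt12 {Ω : Type*} {m0 : MeasurableSpace Ω} (μ : Measure Ω) [IsProbabilityMeasure μ]
    {d ru rh : ℕ}
    (X : Ω → EuclideanSpace ℝ (Fin d)) (Y : Ω → ℝ)
    (U : Ω → EuclideanSpace ℝ (Fin ru)) (Uh : Ω → EuclideanSpace ℝ (Fin rh))
    (hX : MemLp X 2 μ) (hY : MemLp Y 2 μ)
    (hU : MeasurableSpace.comap U inferInstance ≤ m0)
    (hUh : MeasurableSpace.comap Uh inferInstance ≤ m0)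
    (hXU : MeasurableSpace.comap (fun ω => (X ω, U ω)) inferInstance ≤ m0)
    (hXUh : MeasurableSpace.comap (fun ω => (X ω, Uh ω)) inferInstance ≤ m0) :
    ‖((∫ ω, (condExp (MeasurableSpace.comap (fun ω => (X ω, U ω)) inferInstance) μ Y ω) • X ω ∂μ)
        - ∫ ω, (condExp (MeasurableSpace.comap U inferInstance) μ Y ω) •
            (condExp (MeasurableSpace.comap U inferInstance) μ X ω) ∂μ)
      - ((∫ ω, (condExp (MeasurableSpace.comap (fun ω => (X ω, Uh ω)) inferInstance) μ Y ω) • X ω ∂μ)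
        - ∫ ω, (condExp (MeasurableSpace.comap Uh inferInstance) μ Y ω) •
            (condExp (MeasurableSpace.comap Uh inferInstance) μ X ω) ∂μ)‖ ≤
      Real.sqrt (∫ ω, ‖X ω‖ ^ 2 ∂μ) *
        Real.sqrt (∫ ω, (condExp (MeasurableSpace.comap (fun ω => (X ω, Uh ω)) inferInstance) μ Y ω
          - condExp (MeasurableSpace.comap (fun ω => (X ω, U ω)) inferInstance) μ Y ω) ^ 2 ∂μ) +
      Real.sqrt (∫ ω, (Y ω) ^ 2 ∂μ) *
        Real.sqrt (∫ ω, ‖condExp (MeasurableSpace.comap Uh inferInstance) μ X ω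
          - condExp (MeasurableSpace.comap U inferInstance) μ X ω‖ ^ 2 ∂μ) := by
  set mG1 := MeasurableSpace.comap (fun ω => (X ω, U ω)) inferInstance with hmG1
  set mG2 := MeasurableSpace.comap (fun ω => (X ω, Uh ω)) inferInstance with hmG2
  set mH1 := MeasurableSpace.comap U inferInstance with hmH1
  set mH2 := MeasurableSpace.comap Uh inferInstance with hmH2
  set f1 := condExp mG1 μ Y with hf1def
  set f2 := condExp mG2 μ Y with hf2def
  set h1 := condExp mH1 μ Y with hh1def
  set h2 := condExp mH2 μ Y with hh2def
  set g1 := condExp mH1 μ X with hg1def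
  set g2 := condExp mH2 μ X with hg2def
  have hf1 : MemLp f1 2 μ := memLp_two_condexp hXU hY
  have hf2 : MemLp f2 2 μ := memLp_two_condexp hXUh hY
  have hg1 : MemLp g1 2 μ := memLp_two_condexp hU hX
  have hg2 : MemLp g2 2 μ := memLp_two_condexp hUh hX
  -- replace the B-terms using the pull-out identity
  have hB1 : ∫ ω, h1 ω • g1 ω ∂μ = ∫ ω, Y ω • g1 ω ∂μ :=
    (integral_smul_condexp hU hY stronglyMeasurable_condExp hg1).symm
  have hB2 : ∫ ω, h2 ω • g2 ω ∂μ = ∫ ω, Y ω • g2 ω ∂μ :=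
    (integral_smul_condexp hUh hY stronglyMeasurable_condExp hg2).symm
  rw [hB1, hB2]
  -- integrabilities
  have intf1X : Integrable (fun ω => f1 ω • X ω) μ :=
    (hX.smul hf1).integrable le_rfl
  have intf2X : Integrable (fun ω => f2 ω • X ω) μ :=
    (hX.smul hf2).integrable le_rfl
  have intYg1 : Integrable (fun ω => Y ω • g1 ω) μ :=
    (hg1.smul hY).integrable le_rfl
  have intYg2 : Integrable (fun ω => Y ω • g2 ω) μ :=
    (hg2.smul hY).integrable le_rfl
  have hA : (∫ ω, f1 ω • X ω ∂μ) - (∫ ω, f2 ω • X ω ∂μ)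
      = ∫ ω, (f1 ω - f2 ω) • X ω ∂μ := by
    rw [← integral_sub intf1X intf2X]
    congr 1; ext ω; rw [sub_smul]
  have hB : (∫ ω, Y ω • g1 ω ∂μ) - (∫ ω, Y ω • g2 ω ∂μ)
      = ∫ ω, Y ω • (g1 ω - g2 ω) ∂μ := by
    rw [← integral_sub intYg1 intYg2]
    congr 1; ext ω; rw [smul_sub]
  rw [sub_sub_sub_comm, hA, hB]
  have hbA : ‖∫ ω, (f1 ω - f2 ω) • X ω ∂μ‖ ≤
      Real.sqrt (∫ ω, ‖X ω‖ ^ 2 ∂μ) * Real.sqrt (∫ ω, (f1 ω - f2 ω) ^ 2 ∂μ) :=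
    norm_integral_smul_le (hf1.sub hf2) hX
  have hbB : ‖∫ ω, Y ω • (g1 ω - g2 ω) ∂μ‖ ≤
      Real.sqrt (∫ ω, ‖g1 ω - g2 ω‖ ^ 2 ∂μ) * Real.sqrt (∫ ω, (Y ω) ^ 2 ∂μ) :=
    norm_integral_smul_le hY (hg1.sub hg2)
  have hsq1 : (∫ ω, (f1 ω - f2 ω) ^ 2 ∂μ) = ∫ ω, (f2 ω - f1 ω) ^ 2 ∂μ := by
    congr 1; ext ω; ring
  have hsq2 : (∫ ω, ‖g1 ω - g2 ω‖ ^ 2 ∂μ) = ∫ ω, ‖g2 ω - g1 ω‖ ^ 2 ∂μ := by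
    congr 1; ext ω; rw [norm_sub_rev]
  calc ‖(∫ ω, (f1 ω - f2 ω) • X ω ∂μ) - ∫ ω, Y ω • (g1 ω - g2 ω) ∂μ‖
      ≤ ‖∫ ω, (f1 ω - f2 ω) • X ω ∂μ‖ + ‖∫ ω, Y ω • (g1 ω - g2 ω) ∂μ‖ := norm_sub_le _ _
    _ ≤ Real.sqrt (∫ ω, ‖X ω‖ ^ 2 ∂μ) * Real.sqrt (∫ ω, (f2 ω - f1 ω) ^ 2 ∂μ) +
        Real.sqrt (∫ ω, (Y ω) ^ 2 ∂μ) * Real.sqrt (∫ ω, ‖g2 ω - g1 ω‖ ^ 2 ∂μ) := by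
        rw [← hsq1, ← hsq2, mul_comm (Real.sqrt (∫ ω, (Y ω) ^ 2 ∂μ))]
        exact add_le_add hbA hbB
end
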